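/- Let Ω ⊆ ℝ² be open and let r : Ω → ℝ³ be a C³ immersion whose coordinates are isothermal, i.e. r_u·r_v ≡ 0 and |r_u| = |r_v| = λ on Ω for a positive function λ. Then the Gaussian curvature of r satisfies K = −(1/λ²) ( ∂²_{uu} ln λ + ∂²_{vv} ln λ ) at every point of Ω. -/

import Mathlib

noncomputable section

/-- Euclidean dot product on `ℝ³`. -/
def dot3 (x y : Fin 3 → ℝ) : ℝ := x 0 * y 0 + x 1 * y 1 + x 2 * y 2

/-- Cross product on `ℝ³`. -/
def cross3 (x y : Fin 3 → ℝ) : Fin 3 → ℝ :=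
  ![x 1 * y 2 - x 2 * y 1, x 2 * y 0 - x 0 * y 2, x 0 * y 1 - x 1 * y 0]

/-- Euclidean length on `ℝ³`. -/
def len3 (x : Fin 3 → ℝ) : ℝ := Real.sqrt (dot3 x x)

/-- Partial derivative in the first variable. -/
def du {E : Type*} [NormedAddCommGroup E] [NormedSpace ℝ E]
    (f : ℝ × ℝ → E) (p : ℝ × ℝ) : E := fderiv ℝ f p (1, 0)

/-- Partial derivative in the second variable. -/
def dv {E : Type*} [NormedAddCommGroup E] [NormedSpace ℝ E]
    (f : ℝ × ℝ → E) (p : ℝ × ℝ) : E := fderiv ℝ f p (0, 1)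

/-- First fundamental form coefficient `E = r_u · r_u`. -/
def Icoef₁ (r : ℝ × ℝ → Fin 3 → ℝ) (p : ℝ × ℝ) : ℝ := dot3 (du r p) (du r p)

/-- First fundamental form coefficient `F = r_u · r_v`. -/
def Icoef₂ (r : ℝ × ℝ → Fin 3 → ℝ) (p : ℝ × ℝ) : ℝ := dot3 (du r p) (dv r p)

/-- First fundamental form coefficient `G = r_v · r_v`. -/
def Icoef₃ (r : ℝ × ℝ → Fin 3 → ℝ) (p : ℝ × ℝ) : ℝ := dot3 (dv r p) (dv r p)

/-- Unit normal `n = (r_u × r_v)/|r_u × r_v|`. -/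
def unitNormal (r : ℝ × ℝ → Fin 3 → ℝ) (p : ℝ × ℝ) : Fin 3 → ℝ :=
  (len3 (cross3 (du r p) (dv r p)))⁻¹ • cross3 (du r p) (dv r p)

/-- Second fundamental form coefficient `L = r_uu · n`. -/
def IIcoef₁ (r : ℝ × ℝ → Fin 3 → ℝ) (p : ℝ × ℝ) : ℝ := dot3 (du (du r) p) (unitNormal r p)

/-- Second fundamental form coefficient `M = r_uv · n`. -/
def IIcoef₂ (r : ℝ × ℝ → Fin 3 → ℝ) (p : ℝ × ℝ) : ℝ := dot3 (dv (du r) p) (unitNormal r p)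

/-- Second fundamental form coefficient `N = r_vv · n`. -/
def IIcoef₃ (r : ℝ × ℝ → Fin 3 → ℝ) (p : ℝ × ℝ) : ℝ := dot3 (dv (dv r) p) (unitNormal r p)

/-- Gaussian curvature `K = (LN − M²)/(EG − F²)`. -/
def gaussK (r : ℝ × ℝ → Fin 3 → ℝ) (p : ℝ × ℝ) : ℝ :=
  (IIcoef₁ r p * IIcoef₃ r p - IIcoef₂ r p ^ 2) /
    (Icoef₁ r p * Icoef₃ r p - Icoef₂ r p ^ 2)

/-- Mean curvature `H = (EN − 2FM + GL)/(2(EG − F²))`. -/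
def meanH (r : ℝ × ℝ → Fin 3 → ℝ) (p : ℝ × ℝ) : ℝ :=
  (Icoef₁ r p * IIcoef₃ r p - 2 * Icoef₂ r p * IIcoef₂ r p + Icoef₃ r p * IIcoef₁ r p) /
    (2 * (Icoef₁ r p * Icoef₃ r p - Icoef₂ r p ^ 2))

/-! ### Auxiliary lemmas -/

lemma dot3_comm (x y : Fin 3 → ℝ) : dot3 x y = dot3 y x := by unfold dot3; ring

lemma dot3_nonneg (x : Fin 3 → ℝ) : 0 ≤ dot3 x x := by
  unfold dot3; nlinarith [sq_nonneg (x 0), sq_nonneg (x 1), sq_nonneg (x 2)]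

lemma dot3_smul_right (c : ℝ) (x y : Fin 3 → ℝ) : dot3 x (c • y) = c * dot3 x y := by
  simp [dot3]; ring

lemma cross3_lagrange (a b w z : Fin 3 → ℝ) :
    dot3 w (cross3 a b) * dot3 z (cross3 a b) =
      (dot3 a a * dot3 b b - dot3 a b ^ 2) * dot3 w z
        - dot3 b b * (dot3 a w * dot3 a z) - dot3 a a * (dot3 b w * dot3 b z)
        + dot3 a b * (dot3 a w * dot3 b z + dot3 a z * dot3 b w) := by
  simp only [dot3, cross3, Matrix.cons_val_zero, Matrix.cons_val_one, Matrix.head_cons,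
    Matrix.cons_val_two, Matrix.tail_cons]
  ring

lemma cross3_self (a b : Fin 3 → ℝ) :
    dot3 (cross3 a b) (cross3 a b) = dot3 a a * dot3 b b - dot3 a b ^ 2 := by
  simp only [dot3, cross3, Matrix.cons_val_zero, Matrix.cons_val_one, Matrix.head_cons,
    Matrix.cons_val_two, Matrix.tail_cons]
  ring

section PdHelpers
variable {E F : Type*} [NormedAddCommGroup E] [NormedSpace ℝ E]
  [NormedAddCommGroup F] [NormedSpace ℝ F]

lemma pd_clm (L : E →L[ℝ] F) {f : ℝ × ℝ → E} {p : ℝ × ℝ}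
    (hf : DifferentiableAt ℝ f p) (w : ℝ × ℝ) :
    fderiv ℝ (fun q => L (f q)) p w = L (fderiv ℝ f p w) := by
  have h : HasFDerivAt (fun q => L (f q)) (L.comp (fderiv ℝ f p)) p :=
    L.hasFDerivAt.comp p hf.hasFDerivAt
  rw [h.fderiv]; rfl

lemma pd_fderiv_apply {f : ℝ × ℝ → E} {p : ℝ × ℝ}
    (hdf : DifferentiableAt ℝ (fderiv ℝ f) p) (v w : ℝ × ℝ) :
    fderiv ℝ (fun q => fderiv ℝ f q v) p w = fderiv ℝ (fderiv ℝ f) p w v := by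
  have h : HasFDerivAt (fun q => fderiv ℝ f q v)
      ((ContinuousLinearMap.apply ℝ E v).comp (fderiv ℝ (fderiv ℝ f) p)) p :=
    (ContinuousLinearMap.apply ℝ E v).hasFDerivAt.comp p hdf.hasFDerivAt
  rw [h.fderiv]; rfl

lemma pd_congr {f g : ℝ × ℝ → E} {Ω : Set (ℝ × ℝ)} (hΩ : IsOpen Ω) {p : ℝ × ℝ} (hp : p ∈ Ω)
    (h : ∀ q ∈ Ω, f q = g q) (w : ℝ × ℝ) : fderiv ℝ f p w = fderiv ℝ g p w := by
  have he : f =ᶠ[nhds p] g := Filter.eventually_iff_exists_mem.2 ⟨Ω, hΩ.mem_nhds hp, h⟩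
  rw [he.fderiv_eq]

lemma contDiffOn_pd {f : ℝ × ℝ → E} {Ω : Set (ℝ × ℝ)} (hΩ : IsOpen Ω) {n m : WithTop ℕ∞}
    (hf : ContDiffOn ℝ n f Ω) (hmn : m + 1 ≤ n) (w : ℝ × ℝ) :
    ContDiffOn ℝ m (fun q => fderiv ℝ f q w) Ω :=
  (ContinuousLinearMap.apply ℝ E w).contDiff.comp_contDiffOn (hf.fderiv_of_isOpen hΩ hmn)

lemma diffAt_pd {f : ℝ × ℝ → E} {Ω : Set (ℝ × ℝ)} (hΩ : IsOpen Ω) {n : WithTop ℕ∞}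
    (hf : ContDiffOn ℝ n f Ω) (hn : 1 + 1 ≤ n) (w : ℝ × ℝ) {p : ℝ × ℝ} (hp : p ∈ Ω) :
    DifferentiableAt ℝ (fun q => fderiv ℝ f q w) p :=
  ((contDiffOn_pd hΩ hf hn w).differentiableOn one_ne_zero).differentiableAt (hΩ.mem_nhds hp)

lemma pd_symm {f : ℝ × ℝ → E} {Ω : Set (ℝ × ℝ)} (hΩ : IsOpen Ω)
    (hf : ContDiffOn ℝ 2 f Ω) {p : ℝ × ℝ} (hp : p ∈ Ω) (v w : ℝ × ℝ) :
    fderiv ℝ (fun q => fderiv ℝ f q v) p w = fderiv ℝ (fun q => fderiv ℝ f q w) p v := by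
  have hsym := (hf.contDiffAt (hΩ.mem_nhds hp)).isSymmSndFDerivAt (by simp [minSmoothness_of_isRCLikeNormedField])
  have hdf : DifferentiableAt ℝ (fderiv ℝ f) p :=
    ((hf.fderiv_of_isOpen hΩ (by norm_num) : ContDiffOn ℝ 1 (fderiv ℝ f) Ω).differentiableOn one_ne_zero).differentiableAt
      (hΩ.mem_nhds hp)
  rw [pd_fderiv_apply hdf v w, pd_fderiv_apply hdf w v]
  exact hsym w v

lemma pd_mul {f g : ℝ × ℝ → ℝ} {p : ℝ × ℝ} (hf : DifferentiableAt ℝ f p)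
    (hg : DifferentiableAt ℝ g p) (w : ℝ × ℝ) :
    fderiv ℝ (fun q => f q * g q) p w = fderiv ℝ f p w * g p + f p * fderiv ℝ g p w := by
  rw [fderiv_fun_mul hf hg]; simp; ring

lemma pd_inv {g : ℝ × ℝ → ℝ} {p : ℝ × ℝ} (hg : DifferentiableAt ℝ g p) (h0 : g p ≠ 0)
    (w : ℝ × ℝ) :
    fderiv ℝ (fun q => (g q)⁻¹) p w = -fderiv ℝ g p w / g p ^ 2 := by
  have h : HasFDerivAt (fun q => (g q)⁻¹)
      ((ContinuousLinearMap.smulRight (1 : ℝ →L[ℝ] ℝ) (-(g p ^ 2)⁻¹)).comp (fderiv ℝ g p)) p :=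
    (hasFDerivAt_inv h0).comp p hg.hasFDerivAt
  rw [h.fderiv]
  simp [div_eq_inv_mul]
  ring

lemma pd_log {g : ℝ × ℝ → ℝ} {p : ℝ × ℝ} (hg : DifferentiableAt ℝ g p) (h0 : g p ≠ 0)
    (w : ℝ × ℝ) :
    fderiv ℝ (fun q => Real.log (g q)) p w = fderiv ℝ g p w * (g p)⁻¹ := by
  rw [fderiv.log hg h0]
  simp [mul_comm]

lemma pd_pi {f : ℝ × ℝ → Fin 3 → ℝ} {p : ℝ × ℝ} (hf : DifferentiableAt ℝ f p)
    (i : Fin 3) (w : ℝ × ℝ) :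
    fderiv ℝ (fun q => f q i) p w = fderiv ℝ f p w i := by
  set L : (Fin 3 → ℝ) →L[ℝ] ℝ := ContinuousLinearMap.proj i with hL
  have h : HasFDerivAt (fun q => f q i) (L.comp (fderiv ℝ f p)) p :=
    L.hasFDerivAt.comp p hf.hasFDerivAt
  rw [h.fderiv]; rfl

lemma pd_dot3 {f g : ℝ × ℝ → Fin 3 → ℝ} {p : ℝ × ℝ} (hf : DifferentiableAt ℝ f p)
    (hg : DifferentiableAt ℝ g p) (w : ℝ × ℝ) :
    fderiv ℝ (fun q => dot3 (f q) (g q)) p w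
      = dot3 (fderiv ℝ f p w) (g p) + dot3 (f p) (fderiv ℝ g p w) := by
  have hfi : ∀ i, DifferentiableAt ℝ (fun q => f q i) p := fun i => differentiableAt_pi.1 hf i
  have hgi : ∀ i, DifferentiableAt ℝ (fun q => g q i) p := fun i => differentiableAt_pi.1 hg i
  have h01 : DifferentiableAt ℝ (fun q => f q 0 * g q 0 + f q 1 * g q 1) p :=
    ((hfi 0).mul (hgi 0)).add ((hfi 1).mul (hgi 1))
  simp only [dot3]
  rw [show (fun q => f q 0 * g q 0 + f q 1 * g q 1 + f q 2 * g q 2)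
      = fun q => (f q 0 * g q 0 + f q 1 * g q 1) + f q 2 * g q 2 from rfl,
    fderiv_fun_add (g := fun q => f q 2 * g q 2) h01 ((hfi 2).mul (hgi 2))]
  rw [ContinuousLinearMap.add_apply,
    fderiv_fun_add (f := fun q => f q 0 * g q 0) (g := fun q => f q 1 * g q 1)
      ((hfi 0).mul (hgi 0)) ((hfi 1).mul (hgi 1)), ContinuousLinearMap.add_apply,
    pd_mul (hfi 0) (hgi 0), pd_mul (hfi 1) (hgi 1), pd_mul (hfi 2) (hgi 2),
    pd_pi hf 0, pd_pi hf 1, pd_pi hf 2, pd_pi hg 0, pd_pi hg 1, pd_pi hg 2]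
  ring

lemma contDiffOn_dot3 {f g : ℝ × ℝ → Fin 3 → ℝ} {Ω : Set (ℝ × ℝ)} {n : WithTop ℕ∞}
    (hf : ContDiffOn ℝ n f Ω) (hg : ContDiffOn ℝ n g Ω) :
    ContDiffOn ℝ n (fun q => dot3 (f q) (g q)) Ω := by
  have hfi : ∀ i, ContDiffOn ℝ n (fun q => f q i) Ω := fun i => contDiffOn_pi.1 hf i
  have hgi : ∀ i, ContDiffOn ℝ n (fun q => g q i) Ω := fun i => contDiffOn_pi.1 hg i
  exact (((hfi 0).mul (hgi 0)).add ((hfi 1).mul (hgi 1))).add ((hfi 2).mul (hgi 2))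

/-! ### du/dv level wrappers -/

lemma du_congr {E : Type*} [NormedAddCommGroup E] [NormedSpace ℝ E]
    {f g : ℝ × ℝ → E} {Ω : Set (ℝ × ℝ)} (hΩ : IsOpen Ω) {p : ℝ × ℝ} (hp : p ∈ Ω)
    (h : ∀ q ∈ Ω, f q = g q) : du f p = du g p := pd_congr hΩ hp h (1, 0)

lemma dv_congr {E : Type*} [NormedAddCommGroup E] [NormedSpace ℝ E]
    {f g : ℝ × ℝ → E} {Ω : Set (ℝ × ℝ)} (hΩ : IsOpen Ω) {p : ℝ × ℝ} (hp : p ∈ Ω)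
    (h : ∀ q ∈ Ω, f q = g q) : dv f p = dv g p := pd_congr hΩ hp h (0, 1)

lemma du_dot3 {f g : ℝ × ℝ → Fin 3 → ℝ} {p : ℝ × ℝ} (hf : DifferentiableAt ℝ f p)
    (hg : DifferentiableAt ℝ g p) :
    du (fun q => dot3 (f q) (g q)) p = dot3 (du f p) (g p) + dot3 (f p) (du g p) :=
  pd_dot3 hf hg (1, 0)

lemma dv_dot3 {f g : ℝ × ℝ → Fin 3 → ℝ} {p : ℝ × ℝ} (hf : DifferentiableAt ℝ f p)
    (hg : DifferentiableAt ℝ g p) :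
    dv (fun q => dot3 (f q) (g q)) p = dot3 (dv f p) (g p) + dot3 (f p) (dv g p) :=
  pd_dot3 hf hg (0, 1)

lemma du_mul {f g : ℝ × ℝ → ℝ} {p : ℝ × ℝ} (hf : DifferentiableAt ℝ f p)
    (hg : DifferentiableAt ℝ g p) :
    du (fun q => f q * g q) p = du f p * g p + f p * du g p := pd_mul hf hg (1, 0)

lemma dv_mul {f g : ℝ × ℝ → ℝ} {p : ℝ × ℝ} (hf : DifferentiableAt ℝ f p)
    (hg : DifferentiableAt ℝ g p) :
    dv (fun q => f q * g q) p = dv f p * g p + f p * dv g p := pd_mul hf hg (0, 1)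

lemma du_cmul (c : ℝ) {g : ℝ × ℝ → ℝ} {p : ℝ × ℝ} (hg : DifferentiableAt ℝ g p) :
    du (fun q => c * g q) p = c * du g p := by
  show fderiv ℝ (fun q => c * g q) p (1, 0) = _
  rw [fderiv_const_mul hg c]; simp [du]

lemma dv_cmul (c : ℝ) {g : ℝ × ℝ → ℝ} {p : ℝ × ℝ} (hg : DifferentiableAt ℝ g p) :
    dv (fun q => c * g q) p = c * dv g p := by
  show fderiv ℝ (fun q => c * g q) p (0, 1) = _
  rw [fderiv_const_mul hg c]; simp [dv]

lemma du_inv {g : ℝ × ℝ → ℝ} {p : ℝ × ℝ} (hg : DifferentiableAt ℝ g p) (h0 : g p ≠ 0) :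
    du (fun q => (g q)⁻¹) p = -du g p / g p ^ 2 := pd_inv hg h0 (1, 0)

lemma dv_inv {g : ℝ × ℝ → ℝ} {p : ℝ × ℝ} (hg : DifferentiableAt ℝ g p) (h0 : g p ≠ 0) :
    dv (fun q => (g q)⁻¹) p = -dv g p / g p ^ 2 := pd_inv hg h0 (0, 1)

lemma du_log {g : ℝ × ℝ → ℝ} {p : ℝ × ℝ} (hg : DifferentiableAt ℝ g p) (h0 : g p ≠ 0) :
    du (fun q => Real.log (g q)) p = du g p * (g p)⁻¹ := pd_log hg h0 (1, 0)

lemma dv_log {g : ℝ × ℝ → ℝ} {p : ℝ × ℝ} (hg : DifferentiableAt ℝ g p) (h0 : g p ≠ 0) :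
    dv (fun q => Real.log (g q)) p = dv g p * (g p)⁻¹ := pd_log hg h0 (0, 1)

lemma du_zero {p : ℝ × ℝ} : du (fun _ : ℝ × ℝ => (0 : ℝ)) p = 0 := by simp [du]

lemma dv_zero {p : ℝ × ℝ} : dv (fun _ : ℝ × ℝ => (0 : ℝ)) p = 0 := by simp [dv]
/-- **Gaussian curvature in isothermal coordinates**: for a `C³` immersion with
isothermal coordinates (`r_u · r_v ≡ 0` and `|r_u| = |r_v| = λ > 0`),
`K = −(1/λ²)(∂²_{uu} ln λ + ∂²_{vv} ln λ)`. -/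
theorem isothermal_curvature_formula
    (Ω : Set (ℝ × ℝ)) (hΩ : IsOpen Ω)
    (r : ℝ × ℝ → Fin 3 → ℝ)
    (hr : ContDiffOn ℝ 3 r Ω)
    (himm : ∀ p ∈ Ω, cross3 (du r p) (dv r p) ≠ 0)
    (lam : ℝ × ℝ → ℝ)
    (hpos : ∀ p ∈ Ω, 0 < lam p)
    (horth : ∀ p ∈ Ω, dot3 (du r p) (dv r p) = 0)
    (hiso₁ : ∀ p ∈ Ω, len3 (du r p) = lam p)
    (hiso₂ : ∀ p ∈ Ω, len3 (dv r p) = lam p) :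
    ∀ p ∈ Ω,
      gaussK r p =
        -(1 / (lam p) ^ 2) *
          (du (du (fun q => Real.log (lam q))) p +
           dv (dv (fun q => Real.log (lam q))) p) := by
  intro p hp
  have h21 : (2 : WithTop ℕ∞) + 1 ≤ 3 := by norm_num
  have h11 : (1 : WithTop ℕ∞) + 1 ≤ 2 := by norm_num
  have hru2 : ContDiffOn ℝ 2 (du r) Ω := contDiffOn_pd hΩ hr h21 (1, 0)
  have hrv2 : ContDiffOn ℝ 2 (dv r) Ω := contDiffOn_pd hΩ hr h21 (0, 1)
  have dru : ∀ q ∈ Ω, DifferentiableAt ℝ (du r) q := fun q hq =>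
    (hru2.differentiableOn (by norm_num)).differentiableAt (hΩ.mem_nhds hq)
  have drv : ∀ q ∈ Ω, DifferentiableAt ℝ (dv r) q := fun q hq =>
    (hrv2.differentiableOn (by norm_num)).differentiableAt (hΩ.mem_nhds hq)
  have druu : ∀ q ∈ Ω, DifferentiableAt ℝ (du (du r)) q := fun q hq =>
    diffAt_pd hΩ hru2 h11 (1, 0) hq
  have druv : ∀ q ∈ Ω, DifferentiableAt ℝ (dv (du r)) q := fun q hq =>
    diffAt_pd hΩ hru2 h11 (0, 1) hq
  have drvv : ∀ q ∈ Ω, DifferentiableAt ℝ (dv (dv r)) q := fun q hq =>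
    diffAt_pd hΩ hrv2 h11 (0, 1) hq
  set Phi : ℝ × ℝ → ℝ := fun q => dot3 (du r q) (du r q) with hPhi
  have hPhi2 : ContDiffOn ℝ 2 Phi Ω := by rw [hPhi]; exact contDiffOn_dot3 hru2 hru2
  have dPhi : ∀ q ∈ Ω, DifferentiableAt ℝ Phi q := fun q hq =>
    (hPhi2.differentiableOn (by norm_num)).differentiableAt (hΩ.mem_nhds hq)
  have dPu : ∀ q ∈ Ω, DifferentiableAt ℝ (du Phi) q := fun q hq =>
    diffAt_pd hΩ hPhi2 h11 (1, 0) hq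
  have dPv : ∀ q ∈ Ω, DifferentiableAt ℝ (dv Phi) q := fun q hq =>
    diffAt_pd hΩ hPhi2 h11 (0, 1) hq
  -- metric identities
  have hE : ∀ q ∈ Ω, dot3 (du r q) (du r q) = lam q ^ 2 := by
    intro q hq
    have h := hiso₁ q hq
    rw [len3] at h
    rw [← h, Real.sq_sqrt (dot3_nonneg _)]
  have hG : ∀ q ∈ Ω, dot3 (dv r q) (dv r q) = lam q ^ 2 := by
    intro q hq
    have h := hiso₂ q hq
    rw [len3] at h
    rw [← h, Real.sq_sqrt (dot3_nonneg _)]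
  have hPhilam : ∀ q ∈ Ω, Phi q = lam q ^ 2 := fun q hq => by
    rw [hPhi]; exact hE q hq
  have hPpos : ∀ q ∈ Ω, 0 < Phi q := fun q hq => by
    rw [hPhilam q hq]; exact pow_pos (hpos q hq) 2
  have hPne : ∀ q ∈ Ω, Phi q ≠ 0 := fun q hq => ne_of_gt (hPpos q hq)
  have hPhirv : ∀ q ∈ Ω, Phi q = dot3 (dv r q) (dv r q) := fun q hq => by
    rw [hPhilam q hq, hG q hq]
  -- Schwarz symmetry
  have schr : ∀ q ∈ Ω, du (dv r) q = dv (du r) q := fun q hq =>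
    pd_symm hΩ (hr.of_le (show (2 : WithTop ℕ∞) ≤ 3 by norm_num)) hq (0, 1) (1, 0)
  have schru : dv (du (du r)) p = du (dv (du r)) p := pd_symm hΩ hru2 hp (1, 0) (0, 1)
  -- first derivatives of Phi
  have D1 : ∀ q ∈ Ω, du Phi q = 2 * dot3 (du (du r) q) (du r q) := by
    intro q hq
    rw [hPhi]
    rw [du_dot3 (dru q hq) (dru q hq), dot3_comm (du r q) (du (du r) q)]
    ring
  have D2 : ∀ q ∈ Ω, dv Phi q = 2 * dot3 (dv (du r) q) (du r q) := by
    intro q hq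
    rw [hPhi]
    rw [dv_dot3 (dru q hq) (dru q hq), dot3_comm (du r q) (dv (du r) q)]
    ring
  have D3 : ∀ q ∈ Ω, du Phi q = 2 * dot3 (dv (du r) q) (dv r q) := by
    intro q hq
    rw [du_congr hΩ hq hPhirv, du_dot3 (drv q hq) (drv q hq), schr q hq,
      dot3_comm (dv r q) (dv (du r) q)]
    ring
  have D4 : ∀ q ∈ Ω, dv Phi q = 2 * dot3 (dv (dv r) q) (dv r q) := by
    intro q hq
    rw [dv_congr hΩ hq hPhirv, dv_dot3 (drv q hq) (drv q hq),
      dot3_comm (dv r q) (dv (dv r) q)]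
    ring
  have D5 : ∀ q ∈ Ω, dot3 (du (du r) q) (dv r q) = -(dv Phi q) / 2 := by
    intro q hq
    have h0 : du (fun q' => dot3 (du r q') (dv r q')) q = 0 := by
      rw [du_congr hΩ hq (g := fun _ => (0 : ℝ)) (fun q' hq' => horth q' hq')]
      exact du_zero
    rw [du_dot3 (dru q hq) (drv q hq), schr q hq,
      dot3_comm (du r q) (dv (du r) q)] at h0
    have h3 := D2 q hq
    linarith
  have D6 : ∀ q ∈ Ω, dot3 (du r q) (dv (dv r) q) = -(du Phi q) / 2 := by
    intro q hq
    have h0 : dv (fun q' => dot3 (du r q') (dv r q')) q = 0 := by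
      rw [dv_congr hΩ hq (g := fun _ => (0 : ℝ)) (fun q' hq' => horth q' hq')]
      exact dv_zero
    rw [dv_dot3 (dru q hq) (drv q hq)] at h0
    have h3 := D3 q hq
    linarith
  -- third order identities
  have T1 : dot3 (dv (du (du r)) p) (dv r p) + dot3 (du (du r) p) (dv (dv r) p)
      = -2⁻¹ * dv (dv Phi) p := by
    have h0 : dv (fun q => dot3 (du (du r) q) (dv r q)) p
        = dv (fun q => -2⁻¹ * dv Phi q) p :=
      dv_congr hΩ hp (fun q hq => by rw [D5 q hq]; ring)
    rw [dv_dot3 (druu p hp) (drv p hp), dv_cmul _ (dPv p hp)] at h0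
    exact h0
  have T2 : dot3 (du (dv (du r)) p) (dv r p) + dot3 (dv (du r) p) (dv (du r) p)
      = 2⁻¹ * du (du Phi) p := by
    have h0 : du (fun q => dot3 (dv (du r) q) (dv r q)) p
        = du (fun q => 2⁻¹ * du Phi q) p :=
      du_congr hΩ hp (fun q hq => by rw [D3 q hq]; ring)
    rw [du_dot3 (druv p hp) (drv p hp), du_cmul _ (dPu p hp), schr p hp] at h0
    exact h0
  have KEY : dot3 (du (du r) p) (dv (dv r) p) - dot3 (dv (du r) p) (dv (du r) p)
      = -(dv (dv Phi) p) / 2 - du (du Phi) p / 2 := by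
    rw [schru] at T1
    linarith
  -- the normal and the second fundamental form
  have hcc : dot3 (cross3 (du r p) (dv r p)) (cross3 (du r p) (dv r p)) = Phi p ^ 2 := by
    rw [cross3_self, horth p hp, hE p hp, hG p hp, hPhilam p hp]; ring
  have hlen : len3 (cross3 (du r p) (dv r p)) = Phi p := by
    rw [len3, hcc]; exact Real.sqrt_sq (le_of_lt (hPpos p hp))
  have hn : ∀ w, dot3 w (unitNormal r p)
      = (Phi p)⁻¹ * dot3 w (cross3 (du r p) (dv r p)) := by
    intro w
    rw [unitNormal, hlen, dot3_smul_right]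
  have HQ : ∀ w z, dot3 w (cross3 (du r p) (dv r p)) * dot3 z (cross3 (du r p) (dv r p))
      = Phi p ^ 2 * dot3 w z - Phi p * (dot3 (du r p) w * dot3 (du r p) z)
        - Phi p * (dot3 (dv r p) w * dot3 (dv r p) z) := by
    intro w z
    rw [cross3_lagrange, horth p hp, hE p hp, hG p hp, hPhilam p hp]; ring
  have e1 : dot3 (du r p) (du (du r) p) = du Phi p / 2 := by
    rw [dot3_comm]; linarith [D1 p hp]
  have e2 : dot3 (dv r p) (du (du r) p) = -(dv Phi p) / 2 := by
    rw [dot3_comm]; linarith [D5 p hp]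
  have e3 : dot3 (du r p) (dv (du r) p) = dv Phi p / 2 := by
    rw [dot3_comm]; linarith [D2 p hp]
  have e4 : dot3 (dv r p) (dv (du r) p) = du Phi p / 2 := by
    rw [dot3_comm]; linarith [D3 p hp]
  have e5 : dot3 (du r p) (dv (dv r) p) = -(du Phi p) / 2 := D6 p hp
  have e6 : dot3 (dv r p) (dv (dv r) p) = dv Phi p / 2 := by
    rw [dot3_comm]; linarith [D4 p hp]
  have hII1 : IIcoef₁ r p
      = (Phi p)⁻¹ * dot3 (du (du r) p) (cross3 (du r p) (dv r p)) := hn _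
  have hII2 : IIcoef₂ r p
      = (Phi p)⁻¹ * dot3 (dv (du r) p) (cross3 (du r p) (dv r p)) := hn _
  have hII3 : IIcoef₃ r p
      = (Phi p)⁻¹ * dot3 (dv (dv r) p) (cross3 (du r p) (dv r p)) := hn _
  have hI1 : Icoef₁ r p = Phi p := by rw [hPhi]; rfl
  have hI2 : Icoef₂ r p = 0 := horth p hp
  have hI3 : Icoef₃ r p = Phi p := (hPhirv p hp).symm
  -- derivatives of log lam
  have R1 : ∀ q ∈ Ω, du (fun q' => Real.log (lam q')) q
      = 2⁻¹ * (du Phi q * (Phi q)⁻¹) := by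
    intro q hq
    have hcg : du (fun q' => Real.log (lam q')) q
        = du (fun q' => 2⁻¹ * Real.log (Phi q')) q := by
      refine du_congr hΩ hq (fun q' hq' => ?_)
      have hs : Real.sqrt (Phi q') = lam q' := by
        rw [hPhilam q' hq']; exact Real.sqrt_sq (hpos q' hq').le
      rw [← hs, Real.log_sqrt (hPpos q' hq').le]; ring
    rw [hcg, du_cmul _ ((dPhi q hq).log (hPne q hq)), du_log (dPhi q hq) (hPne q hq)]
  have R2 : ∀ q ∈ Ω, dv (fun q' => Real.log (lam q')) q
      = 2⁻¹ * (dv Phi q * (Phi q)⁻¹) := by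
    intro q hq
    have hcg : dv (fun q' => Real.log (lam q')) q
        = dv (fun q' => 2⁻¹ * Real.log (Phi q')) q := by
      refine dv_congr hΩ hq (fun q' hq' => ?_)
      have hs : Real.sqrt (Phi q') = lam q' := by
        rw [hPhilam q' hq']; exact Real.sqrt_sq (hpos q' hq').le
      rw [← hs, Real.log_sqrt (hPpos q' hq').le]; ring
    rw [hcg, dv_cmul _ ((dPhi q hq).log (hPne q hq)), dv_log (dPhi q hq) (hPne q hq)]
  have RUU : du (du (fun q => Real.log (lam q))) p
      = 2⁻¹ * (du (du Phi) p * (Phi p)⁻¹ + du Phi p * (-du Phi p / Phi p ^ 2)) := by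
    have hcg : du (du (fun q => Real.log (lam q))) p
        = du (fun q => 2⁻¹ * (du Phi q * (Phi q)⁻¹)) p := du_congr hΩ hp R1
    rw [hcg, du_cmul _ (g := fun q => du Phi q * (Phi q)⁻¹) ((dPu p hp).mul ((dPhi p hp).inv (hPne p hp))),
      du_mul (g := fun q => (Phi q)⁻¹) (dPu p hp) ((dPhi p hp).inv (hPne p hp)), du_inv (dPhi p hp) (hPne p hp)]
  have RVV : dv (dv (fun q => Real.log (lam q))) p
      = 2⁻¹ * (dv (dv Phi) p * (Phi p)⁻¹ + dv Phi p * (-dv Phi p / Phi p ^ 2)) := by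
    have hcg : dv (dv (fun q => Real.log (lam q))) p
        = dv (fun q => 2⁻¹ * (dv Phi q * (Phi q)⁻¹)) p := dv_congr hΩ hp R2
    rw [hcg, dv_cmul _ (g := fun q => dv Phi q * (Phi q)⁻¹) ((dPv p hp).mul ((dPhi p hp).inv (hPne p hp))),
      dv_mul (g := fun q => (Phi q)⁻¹) (dPv p hp) ((dPhi p hp).inv (hPne p hp)), dv_inv (dPhi p hp) (hPne p hp)]
  -- final computation
  have hP0 := hPne p hp
  have h1 := HQ (du (du r) p) (dv (dv r) p)
  have h2 := HQ (dv (du r) p) (dv (du r) p)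
  rw [e1, e2, e5, e6] at h1
  rw [e3, e4] at h2
  have hS : dot3 (du (du r) p) (dv (dv r) p)
      = dot3 (dv (du r) p) (dv (du r) p) - dv (dv Phi) p / 2 - du (du Phi) p / 2 := by
    linarith
  rw [hS] at h1
  simp only [gaussK]
  rw [hII1, hII2, hII3, hI1, hI2, hI3, RUU, RVV,
    show lam p ^ 2 = Phi p from (hPhilam p hp).symm]
  field_simp
  linear_combination (2*Phi p) * h1 - (2*Phi p) * h2
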